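/- Theorem 4 (identification of the ATT with time-varying covariates under strict exogeneity). Suppose that, pointwise on the sample space, Y_t(0) = θ_t + ξ + λ·F_t + X_t'β + U_t for every t = 1,…,T, where X_t ∈ ℝ^{K_X} are time-varying covariates and the coefficient β ∈ ℝ^{K_X} does not vary over time, with normalizations θ_1 = θ_2 = 0, F_1 = 0, F_2 = 1. Suppose Y_1 = Y_1(0) and Y_2 = Y_2(0) pointwise; Y_t = Y_t(1) on {D=1} for t ≥ 3; P(D=1) > 0; and E[U_s | D=1] = 0 for s ∈ {1, 2, t}. Then for every t ≥ 3, ATT_t = E[Y_t | D=1] − ( θ_t + E[Y_1 | D=1] + E[X_t − X_1 | D=1]·β + F_t·E[Y_2 − Y_1 | D=1] − F_t·E[X_2 − X_1 | D=1]·β ). -/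

import Mathlib

open MeasureTheory ProbabilityTheory

/-- If an integrable function vanishes on `s`, its conditional expectation given `s` is zero. -/
lemma int_eq_zero_on_cond {Ω : Type*} [MeasurableSpace Ω] (μ : Measure Ω)
    (s : Set Ω) (hs : μ s ≠ ⊤) (f : Ω → ℝ)
    (hf : Integrable f (μ[|s])) (h0 : ∀ ω ∈ s, f ω = 0) :
    ∫ ω, f ω ∂μ[|s] = 0 := by
  have hc : (μ s)⁻¹ ≠ 0 := ENNReal.inv_ne_zero.mpr hs
  obtain ⟨g, hg, hfg⟩ := hf.aestronglyMeasurable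
  set N := toMeasurable (μ[|s]) {ω | ¬ f ω = g ω} with hNdef
  have hNm : MeasurableSet N := measurableSet_toMeasurable _ _
  have hNnull : (μ[|s]) N = 0 := by
    rw [hNdef, measure_toMeasurable]; exact ae_iff.mp hfg
  have hμN : μ (s ∩ N) = 0 := by
    rw [ProbabilityTheory.cond_apply' hNm μ] at hNnull
    rcases mul_eq_zero.mp hNnull with h | h
    · exact absurd h hc
    · exact h
  have hA : MeasurableSet {ω | g ω = 0} := hg.measurable (measurableSet_singleton 0)
  have hgnull : (μ[|s]) {ω | ¬ g ω = 0} = 0 := by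
    have hAc : MeasurableSet {ω | ¬ g ω = 0} := by
      simpa [Set.compl_setOf] using hA.compl
    rw [ProbabilityTheory.cond_apply' hAc μ]
    have hsub : s ∩ {ω | ¬ g ω = 0} ⊆ s ∩ N := by
      rintro ω ⟨hωs, hωg⟩
      refine ⟨hωs, subset_toMeasurable _ _ ?_⟩
      simp only [Set.mem_setOf_eq]
      rw [h0 ω hωs]
      exact fun h => hωg h.symm
    have : μ (s ∩ {ω | ¬ g ω = 0}) = 0 :=
      le_antisymm (hμN ▸ measure_mono hsub) zero_le
    rw [this, mul_zero]
  have hg0 : g =ᵐ[μ[|s]] 0 := by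
    rw [Filter.EventuallyEq, ae_iff]
    simpa using hgnull
  exact integral_eq_zero_of_ae (hfg.trans hg0)

theorem statement18
    {Ω : Type*} [MeasurableSpace Ω] (μ : Measure Ω) [IsProbabilityMeasure μ]
    (T KX t : ℕ) (hT : 3 ≤ T) (ht : 3 ≤ t) (htT : t ≤ T)
    (Y0 Y1p Y U : ℕ → Ω → ℝ) (ξ lam : Ω → ℝ)
    (X : ℕ → Ω → Fin KX → ℝ) (D : Ω → ℝ)
    (θ F : ℕ → ℝ) (β : Fin KX → ℝ)
    (hD : ∀ ω, D ω = 0 ∨ D ω = 1)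
    (hmodel : ∀ s, 1 ≤ s → s ≤ T → ∀ ω,
      Y0 s ω = θ s + ξ ω + lam ω * F s + (∑ i, X s ω i * β i) + U s ω)
    (hθ1 : θ 1 = 0) (hθ2 : θ 2 = 0) (hF1 : F 1 = 0) (hF2 : F 2 = 1)
    (hY1 : ∀ ω, Y 1 ω = Y0 1 ω) (hY2 : ∀ ω, Y 2 ω = Y0 2 ω)
    (hYt : ∀ s, 3 ≤ s → s ≤ T → ∀ ω, D ω = 1 → Y s ω = Y1p s ω)
    (hpos : 0 < μ {ω | D ω = 1})
    (hU : ∀ s, s = 1 ∨ s = 2 ∨ s = t →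
      ∫ ω, U s ω ∂μ[|{ω | D ω = 1}] = 0)
    (hintY : ∀ s, s = 1 ∨ s = 2 ∨ s = t →
      Integrable (Y s) (μ[|{ω | D ω = 1}]))
    (hintY0 : Integrable (Y0 t) (μ[|{ω | D ω = 1}]))
    (hintY1p : Integrable (Y1p t) (μ[|{ω | D ω = 1}]))
    (hintU : ∀ s, s = 1 ∨ s = 2 ∨ s = t →
      Integrable (U s) (μ[|{ω | D ω = 1}]))
    (hintX : ∀ s, s = 1 ∨ s = 2 ∨ s = t → ∀ i,
      Integrable (fun ω => X s ω i) (μ[|{ω | D ω = 1}]))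
    (hintξ : Integrable ξ (μ[|{ω | D ω = 1}]))
    (hintlam : Integrable lam (μ[|{ω | D ω = 1}])) :
    ∫ ω, (Y1p t ω - Y0 t ω) ∂μ[|{ω | D ω = 1}]
      = ∫ ω, Y t ω ∂μ[|{ω | D ω = 1}]
        - (θ t + ∫ ω, Y 1 ω ∂μ[|{ω | D ω = 1}]
          + (∑ i, (∫ ω, (X t ω i - X 1 ω i) ∂μ[|{ω | D ω = 1}]) * β i)
          + F t * ∫ ω, (Y 2 ω - Y 1 ω) ∂μ[|{ω | D ω = 1}]
          - F t * (∑ i, (∫ ω, (X 2 ω i - X 1 ω i) ∂μ[|{ω | D ω = 1}]) * β i)) := by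
  set s₁ : Set Ω := {ω | D ω = 1} with hs₁
  set ν : Measure Ω := μ[|s₁] with hν
  haveI : IsProbabilityMeasure ν := cond_isProbabilityMeasure hpos.ne'
  -- integral of Y0 s under the model
  have key : ∀ s, (s = 1 ∨ s = 2 ∨ s = t) → 1 ≤ s → s ≤ T →
      ∫ ω, Y0 s ω ∂ν
        = θ s + (∫ ω, ξ ω ∂ν) + (∫ ω, lam ω ∂ν) * F s
          + ∑ i, (∫ ω, X s ω i ∂ν) * β i := by
    intro s hs h1 h2
    have i1 : Integrable (fun _ : Ω => (θ s : ℝ)) ν := integrable_const _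
    have i3 : Integrable (fun ω => lam ω * F s) ν := hintlam.mul_const _
    have i4 : Integrable (fun ω => ∑ i, X s ω i * β i) ν :=
      integrable_finset_sum _ (fun i _ => (hintX s hs i).mul_const _)
    have i5 := hintU s hs
    calc ∫ ω, Y0 s ω ∂ν
        = ∫ ω, ((θ s + ξ ω + lam ω * F s + ∑ i, X s ω i * β i) + U s ω) ∂ν := by
          apply integral_congr_ae
          filter_upwards with ω
          rw [hmodel s h1 h2 ω]
      _ = (∫ ω, (θ s + ξ ω + lam ω * F s + ∑ i, X s ω i * β i) ∂ν)
            + ∫ ω, U s ω ∂ν :=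
          integral_add (((i1.add hintξ).add i3).add i4) i5
      _ = (∫ ω, ((θ s + ξ ω) + lam ω * F s) ∂ν) + ∫ ω, (∑ i, X s ω i * β i) ∂ν
            + ∫ ω, U s ω ∂ν := by
          rw [show (∫ ω, (θ s + ξ ω + lam ω * F s + ∑ i, X s ω i * β i) ∂ν)
              = (∫ ω, ((θ s + ξ ω) + lam ω * F s) ∂ν)
                + ∫ ω, (∑ i, X s ω i * β i) ∂ν
            from integral_add ((i1.add hintξ).add i3) i4]
      _ = ((∫ ω, (θ s + ξ ω) ∂ν) + ∫ ω, lam ω * F s ∂ν)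
            + ∫ ω, (∑ i, X s ω i * β i) ∂ν + ∫ ω, U s ω ∂ν := by
          rw [show (∫ ω, ((θ s + ξ ω) + lam ω * F s) ∂ν)
              = (∫ ω, (θ s + ξ ω) ∂ν) + ∫ ω, lam ω * F s ∂ν
            from integral_add (i1.add hintξ) i3]
      _ = θ s + (∫ ω, ξ ω ∂ν) + (∫ ω, lam ω ∂ν) * F s
            + ∑ i, (∫ ω, X s ω i ∂ν) * β i := by
        rw [show (∫ ω, (θ s + ξ ω) ∂ν) = (∫ _ω, θ s ∂ν) + ∫ ω, ξ ω ∂ν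
            from integral_add i1 hintξ, integral_const, integral_mul_const,
          integral_finset_sum _ (fun i _ => (hintX s hs i).mul_const _),
          hU s hs]
        simp only [measure_univ, probReal_univ, ENNReal.toReal_one, smul_eq_mul, one_mul, add_zero]
        congr 1
        exact Finset.sum_congr rfl fun i _ => (integral_mul_const _ _)
    
  have e1 : ∫ ω, Y 1 ω ∂ν = (∫ ω, ξ ω ∂ν) + ∑ i, (∫ ω, X 1 ω i ∂ν) * β i := by
    have h := key 1 (Or.inl rfl) le_rfl (by omega)
    have : ∫ ω, Y 1 ω ∂ν = ∫ ω, Y0 1 ω ∂ν :=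
      integral_congr_ae (Filter.Eventually.of_forall hY1)
    rw [this, h, hθ1, hF1]; ring
  have e2 : ∫ ω, Y 2 ω ∂ν
      = (∫ ω, ξ ω ∂ν) + (∫ ω, lam ω ∂ν) + ∑ i, (∫ ω, X 2 ω i ∂ν) * β i := by
    have h := key 2 (Or.inr (Or.inl rfl)) (by omega) (by omega)
    have : ∫ ω, Y 2 ω ∂ν = ∫ ω, Y0 2 ω ∂ν :=
      integral_congr_ae (Filter.Eventually.of_forall hY2)
    rw [this, h, hθ2, hF2]; ring
  have et0 : ∫ ω, Y0 t ω ∂ν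
      = θ t + (∫ ω, ξ ω ∂ν) + (∫ ω, lam ω ∂ν) * F t
        + ∑ i, (∫ ω, X t ω i ∂ν) * β i :=
    key t (Or.inr (Or.inr rfl)) (by omega) htT
  have eYt : ∫ ω, Y t ω ∂ν = ∫ ω, Y1p t ω ∂ν := by
    have hzero : ∫ ω, (Y t ω - Y1p t ω) ∂ν = 0 := by
      refine int_eq_zero_on_cond μ s₁ (measure_ne_top μ _) _
        ((hintY t (Or.inr (Or.inr rfl))).sub hintY1p) ?_
      intro ω hω
      rw [hYt t ht htT ω hω]
      ring
    have hsub := integral_sub (hintY t (Or.inr (Or.inr rfl))) hintY1p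
    rw [hsub] at hzero
    linarith
  -- rewrite the difference integrals in the goal
  have eX : ∀ (a b : ℕ), (a = 1 ∨ a = 2 ∨ a = t) → (b = 1 ∨ b = 2 ∨ b = t) →
      (∑ i, (∫ ω, (X a ω i - X b ω i) ∂ν) * β i)
        = (∑ i, (∫ ω, X a ω i ∂ν) * β i) - ∑ i, (∫ ω, X b ω i ∂ν) * β i := by
    intro a b ha hb
    rw [← Finset.sum_sub_distrib]
    refine Finset.sum_congr rfl fun i _ => ?_
    rw [integral_sub (hintX a ha i) (hintX b hb i), sub_mul]
  have eY21 : ∫ ω, (Y 2 ω - Y 1 ω) ∂ν = (∫ ω, Y 2 ω ∂ν) - ∫ ω, Y 1 ω ∂ν :=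
    integral_sub (hintY 2 (Or.inr (Or.inl rfl))) (hintY 1 (Or.inl rfl))
  have eLHS : ∫ ω, (Y1p t ω - Y0 t ω) ∂ν = (∫ ω, Y1p t ω ∂ν) - ∫ ω, Y0 t ω ∂ν :=
    integral_sub hintY1p hintY0
  rw [eLHS, eY21, eX t 1 (Or.inr (Or.inr rfl)) (Or.inl rfl),
    eX 2 1 (Or.inr (Or.inl rfl)) (Or.inl rfl), et0, e1, e2, eYt]
  ring
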